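/- Centered spatial-lag score identity: under the SAR model Y = S(Zγ₀ + ε) with S = (I − ϑ₀W)⁻¹ deterministic, Z deterministic, and errors ε₁,…,εₙ independent with E[ψ(εᵢ/σ₀)] = 0 and E[ψ(εᵢ/σ₀)εᵢ] = σ₀κ, the expectation E[ψ(εᵢ/σ₀)·(WY)ᵢ] equals (WS)ᵢᵢ·σ₀·κ, so the bias-corrected score ψ(εᵢ/σ₀)(WY)ᵢ − (WS)ᵢᵢσ₀κ has mean zero. -/

import Mathlib

open MeasureTheory ProbabilityTheory

/-- Centered spatial-lag score identity for the SAR model `Y = S(m + ε)` with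
`S = (I − ϑ₀W)⁻¹`: `E[ψ(εᵢ/σ₀)·(WY)ᵢ] = (WS)ᵢᵢ·σ₀·κ`. -/
theorem spatial_lag_score_identity {Ω : Type*} [MeasurableSpace Ω]
    (μ : Measure Ω) [IsProbabilityMeasure μ] {n : ℕ}
    (W : Matrix (Fin n) (Fin n) ℝ) (ϑ₀ : ℝ) (hUnit : IsUnit (1 - ϑ₀ • W))
    (m : Fin n → ℝ)
    (ε : Fin n → Ω → ℝ) (hmeas : ∀ i, Measurable (ε i))
    (hindep : iIndepFun ε μ)
    (σ₀ κ : ℝ) (hσ : 0 < σ₀) (ψ : ℝ → ℝ) (hψ : Measurable ψ)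
    (hint1 : ∀ i, Integrable (fun ω => ψ (ε i ω / σ₀)) μ)
    (hint2 : ∀ i, Integrable (ε i) μ)
    (hint3 : ∀ i k, Integrable (fun ω => ψ (ε i ω / σ₀) * ε k ω) μ)
    (hzero : ∀ i, ∫ ω, ψ (ε i ω / σ₀) ∂μ = 0)
    (hmom : ∀ i, ∫ ω, ψ (ε i ω / σ₀) * ε i ω ∂μ = σ₀ * κ)
    (Y : Ω → Fin n → ℝ)
    (hY : ∀ ω, Y ω = ((1 - ϑ₀ • W)⁻¹).mulVec (m + fun k => ε k ω))
    (i : Fin n) :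
    ∫ ω, ψ (ε i ω / σ₀) * (W.mulVec (Y ω)) i ∂μ
      = (W * (1 - ϑ₀ • W)⁻¹) i i * σ₀ * κ := by
  set S := (1 - ϑ₀ • W)⁻¹ with hS
  have hεim : Measurable fun ω => ψ (ε i ω / σ₀) :=
    hψ.comp ((hmeas i).div_const σ₀)
  have hintk : ∀ k, Integrable (fun ω => ψ (ε i ω / σ₀) * (m k + ε k ω)) μ := by
    intro k
    have := ((hint1 i).mul_const (m k)).add (hint3 i k)
    simpa [mul_add, Pi.add_def] using this
  have hval : ∀ k, ∫ ω, ψ (ε i ω / σ₀) * (m k + ε k ω) ∂μ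
      = if k = i then σ₀ * κ else 0 := by
    intro k
    have h1 : ∫ ω, ψ (ε i ω / σ₀) * (m k + ε k ω) ∂μ
        = (∫ ω, ψ (ε i ω / σ₀) ∂μ) * m k + ∫ ω, ψ (ε i ω / σ₀) * ε k ω ∂μ := by
      simp only [mul_add]
      rw [integral_add ((hint1 i).mul_const (m k)) (hint3 i k),
        integral_mul_const]
    rw [h1, hzero i, zero_mul, zero_add]
    by_cases hk : k = i
    · subst hk; simp [hmom k]
    · have hind : IndepFun (fun ω => ψ (ε i ω / σ₀)) (ε k) μ := by
        have h := hindep.indepFun (Ne.symm hk)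
        exact h.comp (hψ.comp (measurable_id.div_const σ₀)) measurable_id
      have h2 := hind.integral_mul_eq_mul_integral hεim.aestronglyMeasurable
        (hmeas k).aestronglyMeasurable
      have h2' : ∫ ω, ψ (ε i ω / σ₀) * ε k ω ∂μ
          = (∫ ω, ψ (ε i ω / σ₀) ∂μ) * ∫ ω, ε k ω ∂μ := h2
      rw [h2', hzero i, zero_mul]
      simp [hk]
  have hrw : ∀ ω, ψ (ε i ω / σ₀) * (W.mulVec (Y ω)) i
      = ∑ k, (W * S) i k * (ψ (ε i ω / σ₀) * (m k + ε k ω)) := by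
    intro ω
    rw [hY ω, Matrix.mulVec_mulVec]
    simp only [Matrix.mulVec, dotProduct, Pi.add_apply, Finset.mul_sum]
    exact Finset.sum_congr rfl fun k _ => by ring
  calc ∫ ω, ψ (ε i ω / σ₀) * (W.mulVec (Y ω)) i ∂μ
      = ∫ ω, ∑ k, (W * S) i k * (ψ (ε i ω / σ₀) * (m k + ε k ω)) ∂μ := by
        simp_rw [hrw]
    _ = ∑ k, (W * S) i k * ∫ ω, ψ (ε i ω / σ₀) * (m k + ε k ω) ∂μ := by
        rw [integral_finset_sum _ fun k _ => (hintk k).const_mul _]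
        exact Finset.sum_congr rfl fun k _ => MeasureTheory.integral_const_mul _ _
    _ = (W * S) i i * σ₀ * κ := by
        simp only [hval, mul_ite, mul_zero]
        rw [Finset.sum_ite_eq' Finset.univ i]
        simp [mul_assoc]
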